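/- Let (X, μ) be a probability space and let P₁, P₂, P₃ be measurable partitions of X such that P₁ refines P₂ and P₂ refines P₃. Suppose ν₃ denotes a family of measures on the atoms of P₃, with conditional measure families ν₂ on atoms of P₂ and ν₁ on atoms of P₁. If the disintegration of each ν₃-measure along P₂ gives measures equivalent to the ν₂-measures, and the disintegration of each ν₂-measure along P₁ gives measures equivalent to the ν₁-measures, then the disintegration of each ν₃-measure along P₁ gives measures equivalent to the ν₁-measures. Concretely: for a measurable set Z in an atom of P₁'s ambient space, ν-almost-everywhere vanishing along P₂ then along P₃ is equivalent to vanishing for ν₁. -/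

import Mathlib

open MeasureTheory

/-- `νbig` has Lebesgue disintegration along `νsmall`: a measurable set is
`νbig x`-null iff its `νsmall`-leaf measures vanish `νbig x`-almost everywhere. -/
def LebesgueDisintegration {X : Type*} [MeasurableSpace X]
    (νbig νsmall : X → Measure X) : Prop :=
  ∀ x : X, ∀ Z : Set X, MeasurableSet Z →
    (νbig x Z = 0 ↔ ∀ᵐ z ∂(νbig x), νsmall z Z = 0)

/-- Transitivity of Lebesgue disintegration through a filtration of (leafwise)
measure families `ν₁, ν₂, ν₃` associated to nested measurable partitions. -/
theorem stmt2 {X : Type*} [MeasurableSpace X]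
    (ν₁ ν₂ ν₃ : X → Measure X)
    (hmeas₁ : ∀ Z : Set X, MeasurableSet Z → MeasurableSet {z | ν₁ z Z = 0})
    (hmeas₂ : ∀ Z : Set X, MeasurableSet Z → MeasurableSet {z | ν₂ z Z = 0})
    (h32 : LebesgueDisintegration ν₃ ν₂)
    (h21 : LebesgueDisintegration ν₂ ν₁) :
    LebesgueDisintegration ν₃ ν₁ := by
  intro x Z hZ
  set A : Set X := {z | ν₁ z Z = 0} with hA
  have hAmeas : MeasurableSet A := hmeas₁ Z hZ
  have hAc : MeasurableSet Aᶜ := hAmeas.compl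
  -- key: for any z, ν₂ z Aᶜ = 0 ↔ ν₂ z Z = 0
  have key : ∀ z, ν₂ z Aᶜ = 0 ↔ ν₂ z Z = 0 := by
    intro z
    rw [h21 z Z hZ]
    rfl
  constructor
  · intro h3
    -- ν₃ x Z = 0 → a.e. ν₂ z Z = 0 → a.e. ν₂ z Aᶜ = 0 → ν₃ x Aᶜ = 0
    have h2 : ∀ᵐ z ∂(ν₃ x), ν₂ z Z = 0 := (h32 x Z hZ).mp h3
    have : ∀ᵐ z ∂(ν₃ x), ν₂ z Aᶜ = 0 := h2.mono fun z hz => (key z).mpr hz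
    have := (h32 x Aᶜ hAc).mpr this
    exact ae_iff.mpr this
  · intro h1
    have hAc0 : ν₃ x Aᶜ = 0 := ae_iff.mp h1
    have h2 : ∀ᵐ z ∂(ν₃ x), ν₂ z Aᶜ = 0 := (h32 x Aᶜ hAc).mp hAc0
    have : ∀ᵐ z ∂(ν₃ x), ν₂ z Z = 0 := h2.mono fun z hz => (key z).mp hz
    exact (h32 x Z hZ).mpr this
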